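/- Let (v_n)_{n≥1} be a sequence in a Banach space V such that ‖v_{n+1} - v_n‖ = O(1/n) and the Cesàro limit L = lim_{N→∞} (1/N) ∑_{n=1}^{N} v_n exists. Then lim_{n→∞} v_n = L. -/

import Mathlib

open Filter Topology

theorem stmt5 {V : Type*} [NormedAddCommGroup V] [NormedSpace ℝ V]
    (v : ℕ → V) (α : ℝ) (hα : 0 < α)
    (hdiff : ∀ n : ℕ, 1 ≤ n → ‖v (n + 1) - v n‖ ≤ α / n)
    (L : V)
    (hC : Tendsto (fun N : ℕ => (N : ℝ)⁻¹ • ∑ n ∈ Finset.Icc 1 N, v n)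
      atTop (𝓝 L)) :
    Tendsto v atTop (𝓝 L) := by
  set S : ℕ → V := fun N => ∑ n ∈ Finset.Icc 1 N, v n with hS
  set A : ℕ → V := fun N => (N : ℝ)⁻¹ • S N with hAdef
  -- Step 1: increments bound
  have key1 : ∀ n : ℕ, 1 ≤ n → ∀ j : ℕ, n ≤ j →
      ‖v j - v n‖ ≤ ((j : ℝ) - n) * (α / n) := by
    intro n hn j hj
    induction j, hj using Nat.le_induction with
    | base => simp
    | succ j hj ih =>
      have h1 : ‖v (j + 1) - v n‖ ≤ ‖v (j + 1) - v j‖ + ‖v j - v n‖ := by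
        have := norm_add_le (v (j + 1) - v j) (v j - v n)
        simpa using this
      have hjn : (1 : ℕ) ≤ j := le_trans hn hj
      have h2 : ‖v (j + 1) - v j‖ ≤ α / j := hdiff j hjn
      have h3 : α / j ≤ α / n := by
        apply div_le_div_of_nonneg_left hα.le (by exact_mod_cast hn) (by exact_mod_cast hj)
      have hcast : ((j + 1 : ℕ) : ℝ) - n = ((j : ℝ) - n) + 1 := by push_cast; ring
      rw [hcast]
      calc ‖v (j + 1) - v n‖ ≤ ‖v (j + 1) - v j‖ + ‖v j - v n‖ := h1
        _ ≤ α / n + ((j : ℝ) - n) * (α / n) := add_le_add (h2.trans h3) ih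
        _ = ((j : ℝ) - n + 1) * (α / n) := by ring
  -- Step 2: block sum vs k • v n
  have key2 : ∀ n : ℕ, 1 ≤ n → ∀ k : ℕ,
      ‖(∑ j ∈ Finset.Icc (n + 1) (n + k), v j) - (k : ℝ) • v n‖
        ≤ (k : ℝ) * k * (α / n) := by
    intro n hn k
    have hcard : (Finset.Icc (n + 1) (n + k)).card = k := by
      rw [Nat.card_Icc]; omega
    have : (k : ℝ) • v n = ∑ _j ∈ Finset.Icc (n + 1) (n + k), v n := by
      rw [Finset.sum_const, hcard]
      exact Nat.cast_smul_eq_nsmul ℝ k (v n)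
    rw [this, ← Finset.sum_sub_distrib]
    calc ‖∑ j ∈ Finset.Icc (n + 1) (n + k), (v j - v n)‖
        ≤ ∑ j ∈ Finset.Icc (n + 1) (n + k), ‖v j - v n‖ := norm_sum_le _ _
      _ ≤ ∑ _j ∈ Finset.Icc (n + 1) (n + k), (k : ℝ) * (α / n) := by
          apply Finset.sum_le_sum
          intro j hj
          rw [Finset.mem_Icc] at hj
          refine (key1 n hn j (le_trans (Nat.le_succ n) hj.1)).trans ?_
          apply mul_le_mul_of_nonneg_right _ (by positivity)
          have : (j : ℝ) ≤ n + k := by exact_mod_cast hj.2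
          linarith
      _ = (k : ℝ) * k * (α / n) := by
          rw [Finset.sum_const, nsmul_eq_mul, hcard]; ring
  -- Step 3: S m - S n is block sum
  have key3 : ∀ n k : ℕ, S (n + k) - S n = ∑ j ∈ Finset.Icc (n + 1) (n + k), v j := by
    intro n k
    have h1 : Finset.Icc 1 (n + k) = Finset.Ioc 0 (n + k) := by
      rw [← Finset.Icc_add_one_left_eq_Ioc]; rfl
    have h2 : Finset.Icc 1 n = Finset.Ioc 0 n := by rw [← Finset.Icc_add_one_left_eq_Ioc]; rfl
    have h3 : Finset.Icc (n + 1) (n + k) = Finset.Ioc n (n + k) := by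
      rw [← Finset.Icc_add_one_left_eq_Ioc]
    simp only [hS, h1, h2, h3]
    rw [← Finset.sum_Ioc_consecutive _ (Nat.zero_le n) (Nat.le_add_right n k)]
    abel
  -- main argument
  rw [Metric.tendsto_atTop] at hC ⊢
  intro ε hε
  set δ : ℝ := min 1 (ε / (6 * α)) with hδdef
  have hδpos : 0 < δ := lt_min one_pos (by positivity)
  have hδ1 : δ ≤ 1 := min_le_left _ _
  have hαδ : α * δ ≤ ε / 6 := by
    have : δ ≤ ε / (6 * α) := min_le_right _ _
    calc α * δ ≤ α * (ε / (6 * α)) := by nlinarith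
      _ = ε / 6 := by field_simp
  set ε' : ℝ := ε * δ / (3 * (δ + 2)) with hε'def
  have hε'pos : 0 < ε' := by positivity
  obtain ⟨N0, hN0⟩ := hC ε' hε'pos
  set N : ℕ := max N0 (max 1 ⌈6 * α / ε⌉₊) with hNdef
  refine ⟨N, fun n hn => ?_⟩
  have hn1 : 1 ≤ n := le_trans (le_trans (le_max_left _ _) (le_max_right _ _)) hn
  have hnN0 : N0 ≤ n := le_trans (le_max_left _ _) hn
  have hn6 : α / n ≤ ε / 6 := by
    have h1 : (⌈6 * α / ε⌉₊ : ℝ) ≤ n := by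
      exact_mod_cast le_trans (le_trans (le_max_right _ _) (le_max_right _ _)) hn
    have h2 : 6 * α / ε ≤ n := le_trans (Nat.le_ceil _) h1
    have hnpos : (0 : ℝ) < n := by exact_mod_cast hn1
    rw [div_le_div_iff₀ hnpos (by norm_num : (0:ℝ) < 6)]
    have h3 : 6 * α ≤ n * ε := by rwa [div_le_iff₀ hε] at h2
    linarith
  set k : ℕ := ⌈δ * n⌉₊ with hkdef
  have hnpos : (0 : ℝ) < n := by exact_mod_cast hn1
  have hk1 : 1 ≤ k := Nat.one_le_iff_ne_zero.mpr (by
    simp only [hkdef, ne_eq, Nat.ceil_eq_zero, not_le]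
    positivity)
  have hkge : δ * n ≤ k := Nat.le_ceil _
  have hkle : (k : ℝ) ≤ δ * n + 1 := le_of_lt (Nat.ceil_lt_add_one (by positivity))
  have hkpos : (0 : ℝ) < k := by exact_mod_cast hk1
  set m : ℕ := n + k with hmdef
  have hmpos : (0 : ℝ) < m := by positivity
  -- first piece
  have piece1 : ‖v n - (k : ℝ)⁻¹ • (S m - S n)‖ ≤ ε / 6 + ε / 6 := by
    have := key2 n hn1 k
    rw [← key3 n k] at this
    have h0 : v n - (k : ℝ)⁻¹ • (S m - S n)
        = (k : ℝ)⁻¹ • ((k : ℝ) • v n - (S m - S n)) := by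
      rw [smul_sub ((k : ℝ)⁻¹) ((k : ℝ) • v n) (S m - S n), smul_smul,
        inv_mul_cancel₀ (ne_of_gt hkpos), one_smul]
    rw [h0, norm_smul, Real.norm_of_nonneg (inv_nonneg.mpr hkpos.le), norm_sub_rev]
    calc (k : ℝ)⁻¹ * ‖(S m - S n) - (k : ℝ) • v n‖
        ≤ (k : ℝ)⁻¹ * ((k : ℝ) * k * (α / n)) := by
          apply mul_le_mul_of_nonneg_left this (by positivity)
      _ = (k : ℝ) * (α / n) := by field_simp
      _ ≤ (δ * n + 1) * (α / n) := by
          apply mul_le_mul_of_nonneg_right hkle (by positivity)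
      _ = α * δ + α / n := by field_simp
      _ ≤ ε / 6 + ε / 6 := add_le_add hαδ hn6
  -- second piece
  have hid : (k : ℝ)⁻¹ • (S m - S n) - L
      = ((m : ℝ) / k) • (A m - L) - ((n : ℝ) / k) • (A n - L) := by
    have hAm : ((m : ℝ) / k) • A m = (k : ℝ)⁻¹ • S m := by
      simp only [hAdef]
      rw [smul_smul]
      congr 1
      field_simp
    have hAn : ((n : ℝ) / k) • A n = (k : ℝ)⁻¹ • S n := by
      simp only [hAdef]
      rw [smul_smul]
      congr 1
      field_simp
    have hcoef : (m : ℝ) / k - (n : ℝ) / k = 1 := by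
      have hm' : (m : ℝ) = n + k := by rw [hmdef]; push_cast; ring
      rw [hm']; field_simp; ring
    have expand : ((m : ℝ) / k) • (A m - L) - ((n : ℝ) / k) • (A n - L)
        = ((k : ℝ)⁻¹ • S m - (k : ℝ)⁻¹ • S n) - (((m : ℝ) / k - (n : ℝ) / k) • L) := by
      rw [smul_sub ((m : ℝ) / k), smul_sub ((n : ℝ) / k), hAm, hAn, sub_smul]
      abel
    rw [expand, hcoef, one_smul, smul_sub]
  have hAmlt : ‖A m - L‖ < ε' := by
    have := hN0 m (le_trans hnN0 (Nat.le_add_right n k))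
    rwa [dist_eq_norm] at this
  have hAnlt : ‖A n - L‖ < ε' := by
    have := hN0 n hnN0
    rwa [dist_eq_norm] at this
  have hnk : (n : ℝ) / k ≤ 1 / δ := by
    rw [div_le_div_iff₀ hkpos hδpos]
    nlinarith [hkge]
  have hmk : (m : ℝ) / k ≤ 1 + 1 / δ := by
    have hm' : (m : ℝ) = n + k := by rw [hmdef]; push_cast; ring
    rw [hm', add_div, div_self (ne_of_gt hkpos)]
    linarith
  have piece2 : ‖(k : ℝ)⁻¹ • (S m - S n) - L‖ ≤ ε / 3 := by
    rw [hid]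
    have hsum : (1 + 1 / δ) * ε' + (1 / δ) * ε' = ε / 3 := by
      rw [hε'def]; field_simp; ring
    calc ‖((m : ℝ) / k) • (A m - L) - ((n : ℝ) / k) • (A n - L)‖
        ≤ ‖((m : ℝ) / k) • (A m - L)‖ + ‖((n : ℝ) / k) • (A n - L)‖ := norm_sub_le _ _
      _ = ((m : ℝ) / k) * ‖A m - L‖ + ((n : ℝ) / k) * ‖A n - L‖ := by
          rw [norm_smul, norm_smul, Real.norm_of_nonneg (by positivity),
            Real.norm_of_nonneg (by positivity)]
      _ ≤ (1 + 1 / δ) * ε' + (1 / δ) * ε' := by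
          apply add_le_add
          · exact mul_le_mul hmk hAmlt.le (norm_nonneg _) (by positivity)
          · exact mul_le_mul hnk hAnlt.le (norm_nonneg _) (by positivity)
      _ = ε / 3 := hsum
  rw [dist_eq_norm]
  have tri := dist_triangle (v n) ((k : ℝ)⁻¹ • (S m - S n)) L
  rw [dist_eq_norm, dist_eq_norm, dist_eq_norm] at tri
  calc ‖v n - L‖ ≤ ‖v n - (k : ℝ)⁻¹ • (S m - S n)‖ + ‖(k : ℝ)⁻¹ • (S m - S n) - L‖ := tri
    _ ≤ (ε / 6 + ε / 6) + ε / 3 := add_le_add piece1 piece2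
    _ < ε := by linarith
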